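/- In the reduction from partition to the auxiliary assortment problem: given positive integers α_1,...,α_n with total 2L, set w_i = α_i/L and c'_i = α_i/(4L). Then for any S ⊆ [n], the objective (Σ_{i∈S} w_i)/(1 + Σ_{i∈S} w_i) − Σ_{i∈S} c'_i equals f(A(S)) where A(S) = Σ_{i∈S} α_i and f(x) = (3Lx − x²)/(4L² + 4Lx). Consequently, a subset S with |S| ≤ n/2 and A(S) = L exists if and only if the maximum of this objective over sets of size at most n/2 equals 1/4. -/

import Mathlib

/-- Reduction from partition to the auxiliary assortment problem:
with w_i = α_i/L, c'_i = α_i/(4L), the objective equals f(A(S)); and a subset of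
size ≤ n/2 with A(S) = L exists iff the maximum of the objective over sets of
size ≤ n/2 equals 1/4. -/
theorem partition_reduction (n : ℕ) (hn : 0 < n) (α : Fin n → ℕ)
    (hα : ∀ i, 0 < α i) (L : ℝ) (hL : 0 < L)
    (hsum : (∑ i, (α i : ℝ)) = 2 * L) :
    let w : Fin n → ℝ := fun i => (α i : ℝ) / L
    let c : Fin n → ℝ := fun i => (α i : ℝ) / (4 * L)
    let A : Finset (Fin n) → ℝ := fun S => ∑ i ∈ S, (α i : ℝ)
    let f : ℝ → ℝ := fun x => (3 * L * x - x ^ 2) / (4 * L ^ 2 + 4 * L * x)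
    let obj : Finset (Fin n) → ℝ :=
      fun S => (∑ i ∈ S, w i) / (1 + ∑ i ∈ S, w i) - ∑ i ∈ S, c i
    (∀ S : Finset (Fin n), obj S = f (A S)) ∧
    ((∃ S : Finset (Fin n), S.card ≤ n / 2 ∧ A S = L) ↔
      (⨆ S : {S : Finset (Fin n) // S.card ≤ n / 2}, obj S.1) = 1 / 4) := by
  intro w c A f obj
  have hA_nonneg : ∀ S : Finset (Fin n), 0 ≤ A S := fun S =>
    Finset.sum_nonneg fun i _ => Nat.cast_nonneg _
  have key : ∀ S : Finset (Fin n), obj S = f (A S) := by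
    intro S
    have hAS := hA_nonneg S
    have hden : (0:ℝ) < L + A S := by linarith
    simp only [w, c, A, f, obj] at *
    rw [← Finset.sum_div, ← Finset.sum_div]
    field_simp
    ring
  refine ⟨key, ?_⟩
  have fle : ∀ x : ℝ, 0 ≤ x → f x ≤ 1 / 4 := by
    intro x hx
    have hden : (0:ℝ) < 4 * L ^ 2 + 4 * L * x := by positivity
    rw [div_le_div_iff₀ hden (by norm_num)]
    nlinarith [sq_nonneg (x - L)]
  have fL : f L = 1 / 4 := by
    have : (0:ℝ) < 4 * L ^ 2 + 4 * L * L := by positivity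
    simp only [f]
    field_simp [f]
    ring
  have feq : ∀ x : ℝ, 0 ≤ x → f x = 1 / 4 → x = L := by
    intro x hx h
    have hden : (0:ℝ) < 4 * L ^ 2 + 4 * L * x := by positivity
    rw [div_eq_div_iff hden.ne' (by norm_num)] at h
    nlinarith [sq_nonneg (x - L)]
  have hne : Nonempty {S : Finset (Fin n) // S.card ≤ n / 2} :=
    ⟨⟨∅, by simp⟩⟩
  have hbdd : BddAbove (Set.range fun S : {S : Finset (Fin n) // S.card ≤ n / 2} => obj S.1) :=
    Set.Finite.bddAbove (Set.finite_range _)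
  constructor
  · rintro ⟨S, hcard, hAS⟩
    apply le_antisymm
    · exact ciSup_le fun T => by rw [key]; exact fle _ (hA_nonneg _)
    · have h := le_ciSup hbdd (⟨S, hcard⟩ : {S : Finset (Fin n) // S.card ≤ n / 2})
      simpa [key S, hAS, fL] using h
  · intro hsup
    obtain ⟨T, hT⟩ := Finite.exists_max (fun S : {S : Finset (Fin n) // S.card ≤ n / 2} => obj S.1)
    have hTsup : (⨆ S : {S : Finset (Fin n) // S.card ≤ n / 2}, obj S.1) = obj T.1 :=
      le_antisymm (ciSup_le hT) (le_ciSup hbdd T)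
    refine ⟨T.1, T.2, feq _ (hA_nonneg _) ?_⟩
    rw [← key, ← hTsup, hsup]
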